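/- Let X be a cartesian restriction category (restriction category with restriction products) in which all restriction idempotents split and every object is separable (the diagonal Δ : X → X × X is a restriction monic). Then the category Total(X) of total maps has equalizers, and hence all finite limits. Specifically, for total f, g : X → Y, the equalizer is obtained by splitting the restriction idempotent overline{r ∘ ⟨f,g⟩}, where r : Y × Y → Y is the restriction retraction of Δ. -/

import Mathlib

open CategoryTheory CategoryTheory.Limits

universe v u

/-- A restriction category: a category with an operation assigning to each
morphism `f : A ⟶ B` a morphism `ρ f : A ⟶ A` satisfying axioms R.1–R.4.
(Composition is written diagrammatically: `f ≫ g` is "first `f`, then `g`",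
so the paper's `g ∘ f` is `f ≫ g`.) -/
class RestrictionCategory (C : Type u) [Category.{v} C] where
  ρ : ∀ {A B : C}, (A ⟶ B) → (A ⟶ A)
  R1 : ∀ {A B : C} (f : A ⟶ B), ρ f ≫ f = f
  R2 : ∀ {A B D : C} (f : A ⟶ B) (g : A ⟶ D), ρ f ≫ ρ g = ρ g ≫ ρ f
  R3 : ∀ {A B D : C} (f : A ⟶ B) (g : A ⟶ D), ρ (ρ f ≫ g) = ρ f ≫ ρ g
  R4 : ∀ {A B D : C} (f : A ⟶ B) (g : B ⟶ D), f ≫ ρ g = ρ (f ≫ g) ≫ f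

open RestrictionCategory

/-- Binary restriction products on a restriction category: a restriction
functor `pr` (so `ρ (f × g) = ρ f × ρ g`) together with total natural
diagonals `diag` and total lax natural projections `fst`, `snd`, satisfying
the triangle identities. -/
class RestrictionBinaryProducts (C : Type u) [Category.{v} C]
    [RestrictionCategory C] where
  pr : C → C → C
  pmap : ∀ {A A' B B' : C}, (A ⟶ A') → (B ⟶ B') → (pr A B ⟶ pr A' B')
  pmap_id : ∀ A B : C, pmap (𝟙 A) (𝟙 B) = 𝟙 (pr A B)
  pmap_comp : ∀ {A A' A'' B B' B'' : C} (f : A ⟶ A') (f' : A' ⟶ A'')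
    (g : B ⟶ B') (g' : B' ⟶ B''),
    pmap (f ≫ f') (g ≫ g') = pmap f g ≫ pmap f' g'
  pmap_rho : ∀ {A A' B B' : C} (f : A ⟶ A') (g : B ⟶ B'),
    RestrictionCategory.ρ (pmap f g) =
      pmap (RestrictionCategory.ρ f) (RestrictionCategory.ρ g)
  diag : ∀ A : C, A ⟶ pr A A
  diag_total : ∀ A : C, RestrictionCategory.ρ (diag A) = 𝟙 A
  diag_nat : ∀ {A B : C} (f : A ⟶ B), f ≫ diag B = diag A ≫ pmap f f
  fst : ∀ A B : C, pr A B ⟶ A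
  snd : ∀ A B : C, pr A B ⟶ B
  fst_total : ∀ A B : C, RestrictionCategory.ρ (fst A B) = 𝟙 (pr A B)
  snd_total : ∀ A B : C, RestrictionCategory.ρ (snd A B) = 𝟙 (pr A B)
  fst_lax : ∀ {A A' B B' : C} (f : A ⟶ A') (g : B ⟶ B'),
    pmap f g ≫ fst A' B' =
      pmap (RestrictionCategory.ρ f) (RestrictionCategory.ρ g) ≫ fst A B ≫ f
  snd_lax : ∀ {A A' B B' : C} (f : A ⟶ A') (g : B ⟶ B'),
    pmap f g ≫ snd A' B' =
      pmap (RestrictionCategory.ρ f) (RestrictionCategory.ρ g) ≫ snd A B ≫ g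
  diag_fst : ∀ A : C, diag A ≫ fst A A = 𝟙 A
  diag_snd : ∀ A : C, diag A ≫ snd A A = 𝟙 A
  diag_pmap : ∀ A B : C,
    diag (pr A B) ≫ pmap (fst A B) (snd A B) = 𝟙 (pr A B)

open RestrictionBinaryProducts

/-- Restriction products: binary restriction products together with a
restriction terminal object. -/
class RestrictionProducts (C : Type u) [Category.{v} C]
    [RestrictionCategory C] extends RestrictionBinaryProducts C where
  one : C
  bang : ∀ A : C, A ⟶ one
  bang_total : ∀ A : C, RestrictionCategory.ρ (bang A) = 𝟙 A
  bang_one : bang one = 𝟙 one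
  bang_lax : ∀ {A B : C} (f : A ⟶ B),
    f ≫ bang B = RestrictionCategory.ρ f ≫ bang A

section Total

variable {C : Type u} [Category.{v} C] [RestrictionCategory C]

lemma rho_one (A : C) : ρ (𝟙 A) = 𝟙 A := by
  simpa using R1 (𝟙 A)

lemma rho_comp {A B D : C} (f : A ⟶ B) (g : B ⟶ D) :
    ρ (f ≫ g) = ρ (f ≫ ρ g) := by
  have h1 : ρ (f ≫ ρ g) = ρ (f ≫ g) ≫ ρ f := by rw [R4 f g, R3]
  have h2 : ρ f ≫ ρ (f ≫ g) = ρ (f ≫ g) := by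
    rw [← R3, ← Category.assoc, R1]
  rw [h1, R2, h2]

end Total

/-- The category `Total(X)` of total maps of a restriction category `X`. -/
def TotalCat (C : Type u) [Category.{v} C] [RestrictionCategory C] : Type u := C

instance totalCategory (C : Type u) [Category.{v} C] [RestrictionCategory C] :
    Category.{v} (TotalCat C) where
  Hom A B := {f : (show C from A) ⟶ (show C from B) // ρ f = 𝟙 (show C from A)}
  id A := ⟨𝟙 (show C from A), rho_one _⟩
  comp {A B D} f g :=
    ⟨f.1 ≫ g.1, by rw [rho_comp, g.2, Category.comp_id, f.2]⟩
  id_comp f := Subtype.ext (Category.id_comp f.1)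
  comp_id f := Subtype.ext (Category.comp_id f.1)
  assoc f g h := Subtype.ext (Category.assoc f.1 g.1 h.1)

open RestrictionBinaryProducts

section Aux

variable {C : Type u} [Category.{v} C] [RestrictionCategory C]

lemma rho_absorb {A B D : C} (f : A ⟶ B) (g : B ⟶ D) :
    ρ f ≫ ρ (f ≫ g) = ρ (f ≫ g) := by
  rw [← R3, ← Category.assoc, R1]

lemma total_comp {A B D : C} {f : A ⟶ B} {g : B ⟶ D}
    (hf : ρ f = 𝟙 A) (hg : ρ g = 𝟙 B) : ρ (f ≫ g) = 𝟙 A := by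
  rw [rho_comp, hg, Category.comp_id, hf]

lemma rho_rho {A B : C} (f : A ⟶ B) : ρ (ρ f) = ρ f := by
  have h := R3 f (𝟙 A)
  rw [Category.comp_id, rho_one, Category.comp_id] at h
  exact h

variable [RestrictionProducts C]

lemma pair_total {Q A B : C} {u : Q ⟶ A} {v : Q ⟶ B}
    (hu : ρ u = 𝟙 Q) (hv : ρ v = 𝟙 Q) :
    ρ (diag Q ≫ pmap u v) = 𝟙 Q := by
  rw [rho_comp, pmap_rho, hu, hv, pmap_id, Category.comp_id, diag_total]

lemma pair_fst {Q A B : C} (u : Q ⟶ A) (v : Q ⟶ B)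
    (hu : ρ u = 𝟙 Q) (hv : ρ v = 𝟙 Q) :
    (diag Q ≫ pmap u v) ≫ fst A B = u := by
  rw [Category.assoc, fst_lax, hu, hv, pmap_id, Category.id_comp,
    ← Category.assoc, diag_fst, Category.id_comp]

lemma pair_snd {Q A B : C} (u : Q ⟶ A) (v : Q ⟶ B)
    (hu : ρ u = 𝟙 Q) (hv : ρ v = 𝟙 Q) :
    (diag Q ≫ pmap u v) ≫ snd A B = v := by
  rw [Category.assoc, snd_lax, hu, hv, pmap_id, Category.id_comp,
    ← Category.assoc, diag_snd, Category.id_comp]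

lemma pair_eta {Q A B : C} (t : Q ⟶ pr A B) :
    diag Q ≫ pmap (t ≫ fst A B) (t ≫ snd A B) = t := by
  rw [pmap_comp, ← Category.assoc, ← diag_nat, Category.assoc, diag_pmap,
    Category.comp_id]

/-- The core computation: splitting the idempotent `ρ (⟨f,g⟩ ≫ r)` gives an
equalizer of total maps `f` and `g`. -/
lemma eq_core {X Y : C} (f g : X ⟶ Y) (hf : ρ f = 𝟙 X) (hg : ρ g = 𝟙 X)
    (r : pr Y Y ⟶ Y) (hr1 : diag Y ≫ r = 𝟙 Y) (hr2 : r ≫ diag Y = ρ r)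
    (E : C) (i : E ⟶ X) (s : X ⟶ E)
    (his : i ≫ s = 𝟙 E) (hsi : s ≫ i = ρ ((diag X ≫ pmap f g) ≫ r)) :
    ρ i = 𝟙 E ∧ i ≫ f = i ≫ g ∧
      ∀ (Q : C) (j : Q ⟶ X), ρ j = 𝟙 Q → j ≫ f = j ≫ g →
        ∃! k : Q ⟶ E, ρ k = 𝟙 Q ∧ k ≫ i = j := by
  obtain ⟨d, hd⟩ : ∃ d : X ⟶ pr Y Y, d = diag X ≫ pmap f g := ⟨_, rfl⟩
  rw [← hd] at hsi
  obtain ⟨e, he⟩ : ∃ e : X ⟶ X, e = ρ (d ≫ r) := ⟨_, rfl⟩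
  rw [← he] at hsi
  have hdf : d ≫ fst Y Y = f := by rw [hd]; exact pair_fst f g hf hg
  have hdg : d ≫ snd Y Y = g := by rw [hd]; exact pair_snd f g hf hg
  have hed : e ≫ d = (d ≫ r) ≫ diag Y := by
    rw [he, Category.assoc, hr2, R4]
  have hef : e ≫ f = d ≫ r := by
    rw [← hdf, ← Category.assoc, hed, Category.assoc, diag_fst, Category.comp_id]
  have heg : e ≫ g = d ≫ r := by
    rw [← hdg, ← Category.assoc, hed, Category.assoc, diag_snd, Category.comp_id]
  have hie : i ≫ e = i := by
    rw [← hsi, ← Category.assoc, his, Category.id_comp]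
  have hti : ρ i = 𝟙 E := by
    have h := rho_absorb i s
    rw [his, rho_one, Category.comp_id] at h
    exact h
  have hifg : i ≫ f = i ≫ g := by
    rw [← hie, Category.assoc, Category.assoc, hef, heg]
  refine ⟨hti, hifg, fun Q j hj hjf => ?_⟩
  have hjd : j ≫ d = (j ≫ f) ≫ diag Y := by
    rw [hd, ← Category.assoc, diag_nat j, Category.assoc, ← pmap_comp, ← hjf,
      diag_nat (j ≫ f)]
  have hjdr : j ≫ (d ≫ r) = j ≫ f := by
    rw [← Category.assoc, hjd, Category.assoc, hr1, Category.comp_id]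
  have hje : j ≫ e = j := by
    rw [he, R4 j (d ≫ r), hjdr, total_comp hj hf, Category.id_comp]
  have hs : ρ s = e := by
    have h1 : ρ (s ≫ i) = ρ s := by
      rw [rho_comp, hti, Category.comp_id]
    rw [← h1, hsi, he, rho_rho]
  have hkt : ρ (j ≫ s) = 𝟙 Q := by
    rw [rho_comp, hs, hje, hj]
  have hki : (j ≫ s) ≫ i = j := by
    rw [Category.assoc, hsi, hje]
  refine ⟨j ≫ s, ⟨hkt, hki⟩, ?_⟩
  rintro k' ⟨hk't, hk'i⟩
  calc k' = k' ≫ 𝟙 E := by rw [Category.comp_id]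
    _ = k' ≫ (i ≫ s) := by rw [his]
    _ = (k' ≫ i) ≫ s := by rw [Category.assoc]
    _ = j ≫ s := by rw [hk'i]

end Aux

section TotalLimits

variable {C : Type u} [Category.{v} C] [RestrictionCategory C]
  [RestrictionProducts C]

/-- The identity map of types, viewing an object of `C` as an object of
`Total(C)`. -/
def ofC (A : C) : TotalCat C := A

/-- The terminal object of `Total(C)`. -/
noncomputable def totalOne : TotalCat C := ofC (RestrictionProducts.one (C := C))

/-- The unique total map to the restriction terminal object. -/
def termFrom (A : TotalCat C) : A ⟶ (totalOne : TotalCat C) :=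
  ⟨RestrictionProducts.bang (show C from A), RestrictionProducts.bang_total _⟩

lemma term_uniq (A : TotalCat C) (m : A ⟶ (totalOne : TotalCat C)) :
    m = termFrom A := by
  apply Subtype.ext
  have h := RestrictionProducts.bang_lax
    (B := RestrictionProducts.one (C := C)) m.1
  rw [RestrictionProducts.bang_one] at h
  exact (Category.comp_id _).symm.trans (h.trans ((congrArg (· ≫ _) m.2).trans (Category.id_comp _)))

/-- `Total(X)` has a terminal object, namely the restriction terminal object. -/
lemma totalHasTerminal : HasTerminal (TotalCat C) := by
  haveI : ∀ A : TotalCat C, Nonempty (A ⟶ (totalOne : TotalCat C)) :=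
    fun A => ⟨termFrom A⟩
  haveI : ∀ A : TotalCat C, Subsingleton (A ⟶ (totalOne : TotalCat C)) :=
    fun A => ⟨fun m n => by rw [term_uniq A m, term_uniq A n]⟩
  exact hasTerminal_of_unique (totalOne : TotalCat C)

/-- The binary product cone in `Total(C)` on the restriction product. -/
def prodCone (A B : C) : BinaryFan (ofC A : TotalCat C) (ofC B) :=
  BinaryFan.mk (P := (ofC (pr A B) : TotalCat C))
    (⟨fst A B, fst_total A B⟩ : (ofC (pr A B) : TotalCat C) ⟶ ofC A)
    (⟨snd A B, snd_total A B⟩ : (ofC (pr A B) : TotalCat C) ⟶ ofC B)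

/-- The restriction product is a product in `Total(C)`. -/
def prodIsLimit (A B : C) : IsLimit (prodCone (C := C) A B) :=
  BinaryFan.isLimitMk
    (fun c => ⟨diag _ ≫ pmap c.fst.1 c.snd.1, pair_total c.fst.2 c.snd.2⟩)
    (fun c => Subtype.ext (pair_fst c.fst.1 c.snd.1 c.fst.2 c.snd.2))
    (fun c => Subtype.ext (pair_snd c.fst.1 c.snd.1 c.fst.2 c.snd.2))
    (fun c m h1 h2 => by
      apply Subtype.ext
      have e1 : m.1 ≫ fst A B = c.fst.1 := congrArg Subtype.val h1
      have e2 : m.1 ≫ snd A B = c.snd.1 := congrArg Subtype.val h2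
      exact (pair_eta m.1).symm.trans (congrArg₂ (fun a b => RestrictionBinaryProducts.diag _ ≫ pmap a b) e1 e2))

/-- `Total(X)` has binary products, given by the restriction products. -/
lemma totalHasBinaryProducts : HasBinaryProducts (TotalCat C) := by
  have hpp : ∀ A B : TotalCat C, HasLimit (pair A B) := fun A B =>
    HasLimit.mk ⟨prodCone (C := C) (show C from A) (show C from B),
      prodIsLimit (C := C) _ _⟩
  exact @hasBinaryProducts_of_hasLimit_pair _ _ (fun {A B} => hpp A B)

end TotalLimits

/-- Let `X` be a cartesian restriction category (restriction products) in
which all restriction idempotents split and every object is separable (each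
diagonal is a restriction monic).  Then `Total(X)` has equalizers, and hence
all finite limits; specifically, for total `f g : X ⟶ Y` the equalizer is
obtained by splitting the restriction idempotent `overline{r ∘ ⟨f,g⟩}`,
where `r` is the restriction retraction of the diagonal of `Y`. -/
theorem stmt_18 {C : Type u} [Category.{v} C] [RestrictionCategory C]
    [RestrictionProducts C]
    (hsplit : ∀ (A : C) (e : A ⟶ A), ρ e = e →
      ∃ (E : C) (i : E ⟶ A) (s : A ⟶ E), i ≫ s = 𝟙 E ∧ s ≫ i = e)
    (hsep : ∀ Y : C, ∃ r : pr Y Y ⟶ Y, diag Y ≫ r = 𝟙 Y ∧ r ≫ diag Y = ρ r) :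
    HasEqualizers (TotalCat C) ∧ HasFiniteLimits (TotalCat C) ∧
    (∀ (X Y : C) (f g : X ⟶ Y), ρ f = 𝟙 X → ρ g = 𝟙 X →
      ∀ r : pr Y Y ⟶ Y, diag Y ≫ r = 𝟙 Y → r ≫ diag Y = ρ r →
      ∀ (E : C) (i : E ⟶ X) (s : X ⟶ E),
        i ≫ s = 𝟙 E → s ≫ i = ρ ((diag X ≫ pmap f g) ≫ r) →
        (ρ i = 𝟙 E ∧ i ≫ f = i ≫ g ∧
         ∀ (Q : C) (j : Q ⟶ X), ρ j = 𝟙 Q → j ≫ f = j ≫ g →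
           ∃! k : Q ⟶ E, ρ k = 𝟙 Q ∧ k ≫ i = j)) := by
  have hasEq : HasEqualizers (TotalCat C) := by
    have hpp : ∀ {A B : TotalCat C} (F G : A ⟶ B), HasLimit (parallelPair F G) := by
      intro A B F G
      obtain ⟨r, hr1, hr2⟩ := hsep (show C from B)
      obtain ⟨E, i, s, his, hsi⟩ :=
        hsplit _ (ρ ((diag (show C from A) ≫ pmap F.1 G.1) ≫ r)) (rho_rho _)
      obtain ⟨hti, hifg, huniv⟩ :=
        eq_core F.1 G.1 F.2 G.2 r hr1 hr2 E i s his hsi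
      apply HasLimit.mk
      refine ⟨Fork.ofι ((⟨i, hti⟩ : (ofC E : TotalCat C) ⟶ A))
        (Subtype.ext hifg), Fork.IsLimit.mk' _ (fun c => ?_)⟩
      have hcw : c.ι.1 ≫ F.1 = c.ι.1 ≫ G.1 := congrArg Subtype.val c.condition
      have hE := huniv _ c.ι.1 c.ι.2 hcw
      refine ⟨⟨hE.choose, hE.choose_spec.1.1⟩,
        Subtype.ext hE.choose_spec.1.2, fun {m} hm => ?_⟩
      exact Subtype.ext (hE.choose_spec.2 m.1 ⟨m.2, congrArg Subtype.val hm⟩)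
    exact @hasEqualizers_of_hasLimit_parallelPair _ _ (fun {A B F G} => hpp F G)
  haveI := hasEq
  haveI := totalHasTerminal (C := C)
  haveI := totalHasBinaryProducts (C := C)
  haveI : HasFiniteProducts (TotalCat C) :=
    hasFiniteProducts_of_has_binary_and_terminal
  refine ⟨hasEq, hasFiniteLimits_of_hasEqualizers_and_finite_products, ?_⟩
  intro X Y f g hf hg r hr1 hr2 E i s his hsi
  exact eq_core f g hf hg r hr1 hr2 E i s his hsi
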